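/- Let R > 0 and let γ : ℝ → EuclideanSpace ℝ (Fin 2) be twice continuously differentiable, and suppose there is a continuous function c : ℝ → ℝ with c(t) ≥ 0 and γ''(t) = −c(t) • γ(t) for all t (an attractive central force directed toward the origin). Let T > 0, assume γ'(t) ≠ 0 for all t ∈ [0, T], that ‖γ(t)‖ < R for all t ∈ [0, T), and that ‖γ(T)‖ = R (T is the first time the trajectory reaches the boundary sphere). Let s* be the smallest nonnegative real number with ‖γ(0) + s* • (γ'(0)/‖γ'(0)‖)‖ = R (the distance from A = γ(0) along the straight ray in the initial direction to the boundary sphere). Then the arclength of the trajectory satisfies ∫₀ᵀ ‖γ'(t)‖ dt ≥ s*. -/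

import Mathlib

open scoped RealInnerProductSpace

/-- **Proposition 1.** For a planar trajectory under an attractive central force
directed toward the origin, the straight-line distance from the start point (in the
initial direction) to the boundary sphere of radius `R` is a lower bound for the
arclength of the trajectory up to its first boundary crossing. -/
theorem arclength_ge_straight_exit_distance
    (R : ℝ) (hR : 0 < R)
    (γ : ℝ → EuclideanSpace ℝ (Fin 2)) (hγ : ContDiff ℝ 2 γ)
    (c : ℝ → ℝ) (hc : Continuous c) (hc0 : ∀ t, 0 ≤ c t)
    (hODE : ∀ t, deriv (deriv γ) t = -c t • γ t)
    (T : ℝ) (hT : 0 < T)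
    (hv : ∀ t ∈ Set.Icc (0 : ℝ) T, deriv γ t ≠ 0)
    (hin : ∀ t ∈ Set.Ico (0 : ℝ) T, ‖γ t‖ < R)
    (hbd : ‖γ T‖ = R)
    (sStar : ℝ)
    (hsStar : IsLeast
      {s : ℝ | 0 ≤ s ∧ ‖γ 0 + s • (‖deriv γ 0‖⁻¹ • deriv γ 0)‖ = R} sStar) :
    sStar ≤ ∫ t in (0 : ℝ)..T, ‖deriv γ t‖ := by
  -- Differentiability facts
  have hsplit := contDiff_succ_iff_deriv.mp (show ContDiff ℝ (1+1) γ from by exact_mod_cast hγ)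
  have hdγ : Differentiable ℝ γ := hsplit.1
  have hdγ' : Differentiable ℝ (deriv γ) := (hsplit.2.2).differentiable one_ne_zero
  have hcγ : Continuous γ := hdγ.continuous
  have hcγ' : Continuous (deriv γ) := hdγ'.continuous
  set n : ℝ → ℝ := fun t => ‖deriv γ t‖ with hn_def
  have hcn : Continuous n := hcγ'.norm
  set S : ℝ → ℝ := fun t => ∫ u in (0:ℝ)..t, n u with hS_def
  have hSd : ∀ t, HasDerivAt S (n t) t := fun t =>
    (hcn.integral_hasStrictDerivAt 0 t).hasDerivAt
  have hcS : Continuous S := by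
    have : Differentiable ℝ S := fun t => (hSd t).differentiableAt
    exact this.continuous
  set p : ℝ → ℝ := fun t => ⟪γ t, deriv γ t⟫ with hp_def
  have hγd : ∀ t, HasDerivAt γ (deriv γ t) t := fun t => (hdγ t).hasDerivAt
  have hγ'd : ∀ t, HasDerivAt (deriv γ) (-c t • γ t) t := by
    intro t
    have h := (hdγ' t).hasDerivAt
    rwa [hODE t] at h
  have hcp : Continuous p := hcγ.inner hcγ'
  have hpd : ∀ t, HasDerivAt p (n t ^ 2 - c t * ‖γ t‖ ^ 2) t := by
    intro t
    have h := (hγd t).inner ℝ (hγ'd t)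
    refine h.congr_deriv ?_
    rw [real_inner_smul_right, real_inner_self_eq_norm_sq]
    simp only [hn_def]
    rw [real_inner_self_eq_norm_sq]
    ring
  -- positivity of the speed on [0,T]
  have hnpos : ∀ t ∈ Set.Icc (0:ℝ) T, 0 < n t := fun t ht =>
    norm_pos_iff.mpr (hv t ht)
  -- derivative of the speed
  have hnd : ∀ t, deriv γ t ≠ 0 → HasDerivAt n (-(c t) * p t / n t) t := by
    intro t ht
    have h2 : HasDerivAt (fun u => ‖deriv γ u‖ ^ 2) (2 * ⟪deriv γ t, -c t • γ t⟫) t :=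
      (hγ'd t).norm_sq
    have hne : ‖deriv γ t‖ ^ 2 ≠ 0 := pow_ne_zero 2 (norm_ne_zero_iff.mpr ht)
    have h3 := h2.sqrt hne
    have heq : (fun y => Real.sqrt (‖deriv γ y‖ ^ 2)) = n := by
      funext y; simp [hn_def, Real.sqrt_sq (norm_nonneg _)]
    rw [heq] at h3
    convert h3 using 1
    rw [Real.sqrt_sq (norm_nonneg _), real_inner_smul_right, real_inner_comm]
    have hnt : n t ≠ 0 := norm_ne_zero_iff.mpr ht
    field_simp [hp_def, hn_def]
    ring
  -- the function g = p/n - S and its monotonicity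
  set g : ℝ → ℝ := fun t => p t / n t - S t with hg_def
  have hgd : ∀ t, deriv γ t ≠ 0 →
      HasDerivAt g (((n t ^ 2 - c t * ‖γ t‖ ^ 2) * n t - p t * (-(c t) * p t / n t)) / n t ^ 2
        - n t) t := by
    intro t ht
    exact ((hpd t).div (hnd t ht) (norm_ne_zero_iff.mpr ht)).sub (hSd t)
  have hg_deriv_nonpos : ∀ t, deriv γ t ≠ 0 →
      ((n t ^ 2 - c t * ‖γ t‖ ^ 2) * n t - p t * (-(c t) * p t / n t)) / n t ^ 2 - n t ≤ 0 := by
    intro t ht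
    have hnt : 0 < n t := norm_pos_iff.mpr ht
    have hCS : p t * p t ≤ ‖γ t‖ ^ 2 * n t ^ 2 := by
      have := real_inner_mul_inner_self_le (γ t) (deriv γ t)
      rw [real_inner_self_eq_norm_sq, real_inner_self_eq_norm_sq] at this
      simpa [hp_def, hn_def] using this
    have hc' := hc0 t
    have key : ((n t ^ 2 - c t * ‖γ t‖ ^ 2) * n t - p t * (-(c t) * p t / n t)) / n t ^ 2 - n t
        = c t * (p t * p t - ‖γ t‖ ^ 2 * n t ^ 2) / n t ^ 3 := by
      field_simp
      ring
    rw [key]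
    apply div_nonpos_of_nonpos_of_nonneg _ (by positivity)
    exact mul_nonpos_of_nonneg_of_nonpos hc' (by linarith)
  have hgmono : AntitoneOn g (Set.Icc 0 T) := by
    apply antitoneOn_of_deriv_nonpos (convex_Icc 0 T)
    · apply ContinuousOn.sub
      · exact ContinuousOn.div hcp.continuousOn hcn.continuousOn
          (fun x hx => (hnpos x hx).ne')
      · exact hcS.continuousOn
    · intro x hx
      rw [interior_Icc] at hx
      have hx' : x ∈ Set.Icc (0:ℝ) T := Set.mem_Icc.mpr ⟨hx.1.le, hx.2.le⟩
      exact ((hgd x (hv x hx')).differentiableAt).differentiableWithinAt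
    · intro x hx
      rw [interior_Icc] at hx
      have hx' : x ∈ Set.Icc (0:ℝ) T := Set.mem_Icc.mpr ⟨hx.1.le, hx.2.le⟩
      rw [(hgd x (hv x hx')).deriv]
      exact hg_deriv_nonpos x (hv x hx')
  -- a := g 0 is the initial inner product against the unit initial direction
  set a : ℝ := p 0 / n 0 with ha_def
  have hS0 : S 0 = 0 := intervalIntegral.integral_same
  have hg0 : g 0 = a := by simp [hg_def, hS0, ha_def]
  -- the comparison function F and its monotonicity
  set F : ℝ → ℝ := fun t => ‖γ t‖ ^ 2 - ‖γ 0‖ ^ 2 - 2 * a * S t - S t ^ 2 with hF_def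
  have hFd : ∀ t, HasDerivAt F (2 * p t - 2 * a * n t - 2 * S t * n t) t := by
    intro t
    have h1 : HasDerivAt (fun u => ‖γ u‖ ^ 2) (2 * ⟪γ t, deriv γ t⟫) t := (hγd t).norm_sq
    have h2 := (((h1.sub_const (‖γ 0‖ ^ 2)).sub ((hSd t).const_mul (2 * a))).sub
      (((hSd t).pow 2)))
    refine h2.congr_deriv ?_
    simp only [hp_def, pow_one]
    ring
  have hFmono : AntitoneOn F (Set.Icc 0 T) := by
    apply antitoneOn_of_deriv_nonpos (convex_Icc 0 T)
    · have hcF : Continuous F := by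
        apply Continuous.sub
        apply Continuous.sub
        apply Continuous.sub
        · exact (hcγ.norm).pow 2
        · exact continuous_const
        · exact continuous_const.mul hcS
        · exact hcS.pow 2
      exact hcF.continuousOn
    · intro x hx
      exact ((hFd x).differentiableAt).differentiableWithinAt
    · intro x hx
      rw [interior_Icc] at hx
      have hx' : x ∈ Set.Icc (0:ℝ) T := Set.mem_Icc.mpr ⟨hx.1.le, hx.2.le⟩
      rw [(hFd x).deriv]
      have hgle : g x ≤ a := hg0 ▸ hgmono (Set.left_mem_Icc.mpr hT.le) hx' hx.1.le
      have hnx : 0 < n x := hnpos x hx'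
      have : p x / n x - S x ≤ a := hgle
      have hpx : p x ≤ (a + S x) * n x :=
        (div_le_iff₀ hnx).mp (by linarith)
      nlinarith [hnx, hpx]
  -- conclude F T ≤ F 0 = 0
  have hFT : F T ≤ 0 := by
    have := hFmono (Set.left_mem_Icc.mpr hT.le) (Set.right_mem_Icc.mpr hT.le) hT.le
    simpa [hF_def, hS0] using this
  set L : ℝ := S T with hL_def
  have hq : R ^ 2 ≤ ‖γ 0‖ ^ 2 + 2 * a * L + L ^ 2 := by
    have : ‖γ T‖ ^ 2 - ‖γ 0‖ ^ 2 - 2 * a * L - L ^ 2 ≤ 0 := hFT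
    rw [hbd] at this
    linarith
  have hLnonneg : 0 ≤ L := by
    rw [hL_def, hS_def]
    exact intervalIntegral.integral_nonneg hT.le (fun u _ => norm_nonneg _)
  -- the quadratic identity for points on the ray
  have hn0 : n 0 ≠ 0 := (hnpos 0 (Set.left_mem_Icc.mpr hT.le)).ne'
  have hray : ∀ s : ℝ, ‖γ 0 + s • (‖deriv γ 0‖⁻¹ • deriv γ 0)‖ ^ 2
      = ‖γ 0‖ ^ 2 + 2 * a * s + s ^ 2 := by
    intro s
    rw [norm_add_sq_real]
    have h1 : ⟪γ 0, s • (‖deriv γ 0‖⁻¹ • deriv γ 0)⟫ = s * a := by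
      rw [real_inner_smul_right, real_inner_smul_right]
      rw [ha_def, hp_def, hn_def]
      field_simp
    have h2 : ‖s • (‖deriv γ 0‖⁻¹ • deriv γ 0)‖ ^ 2 = s ^ 2 := by
      rw [norm_smul, norm_smul, norm_inv, norm_norm]
      rw [Real.norm_eq_abs]
      rw [inv_mul_cancel₀ hn0]
      rw [mul_one, sq_abs]
    rw [h1, h2]
    ring
  obtain ⟨⟨hs0, hsEq⟩, hlb⟩ := hsStar
  have hstar : ‖γ 0‖ ^ 2 + 2 * a * sStar + sStar ^ 2 = R ^ 2 := by
    rw [← hray sStar, hsEq]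
  have hin0 : ‖γ 0‖ < R := hin 0 (Set.mem_Ico.mpr ⟨le_refl 0, hT⟩)
  -- final algebra
  show sStar ≤ L
  by_contra hcon
  push_neg at hcon
  have hspos : 0 < sStar := lt_of_le_of_lt hLnonneg hcon
  have hfrom0 : 0 < sStar * (sStar + 2 * a) := by nlinarith [norm_nonneg (γ 0)]
  have h2a : 0 < sStar + 2 * a := by
    rcases (mul_pos_iff.mp hfrom0) with ⟨_, h⟩ | ⟨h, _⟩
    · exact h
    · linarith
  nlinarith [hq, hstar, hcon, hLnonneg, h2a]
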